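/- For any pair of discrete random variables (X, Y) with X taking values in a countably infinite alphabet, and every k ≥ 1, ∑_{x=1}^{k} P_X↓(x) ≤ E[ ∑_{x=1}^{k} P_{X|Y}↓(x) ], where P↓ denotes decreasing rearrangement. -/
import Mathlib


noncomputable section

def IsPmf {α : Type*} (p : α → ℝ) : Prop := (∀ x, 0 ≤ p x) ∧ ∑' x, p x = 1

def topSum (p : ℕ → ℝ) (k : ℕ) : ℝ :=
  sSup {t : ℝ | ∃ s : Finset ℕ, s.card = k ∧ t = ∑ x ∈ s, p x}

lemma pmf_summable {α : Type*} {p : α → ℝ} (hp : IsPmf p) : Summable p := by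
  by_contra h
  have := hp.2
  rw [tsum_eq_zero_of_not_summable h] at this
  norm_num at this

lemma pmf_sum_le_one {p : ℕ → ℝ} (hp : IsPmf p) (s : Finset ℕ) : ∑ x ∈ s, p x ≤ 1 :=
  hp.2 ▸ Summable.sum_le_tsum s (fun x _ => hp.1 x) (pmf_summable hp)

lemma topSum_set_nonempty (p : ℕ → ℝ) (k : ℕ) :
    {t : ℝ | ∃ s : Finset ℕ, s.card = k ∧ t = ∑ x ∈ s, p x}.Nonempty := by
  exact ⟨∑ x ∈ Finset.range k, p x, Finset.range k, Finset.card_range k, rfl⟩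

lemma topSum_bddAbove {p : ℕ → ℝ} (hp : IsPmf p) (k : ℕ) :
    BddAbove {t : ℝ | ∃ s : Finset ℕ, s.card = k ∧ t = ∑ x ∈ s, p x} := by
  refine ⟨1, ?_⟩
  rintro t ⟨s, _, rfl⟩
  exact pmf_sum_le_one hp s

lemma le_topSum {p : ℕ → ℝ} (hp : IsPmf p) {k : ℕ} {s : Finset ℕ} (hs : s.card = k) :
    ∑ x ∈ s, p x ≤ topSum p k :=
  le_csSup (topSum_bddAbove hp k) ⟨s, hs, rfl⟩

lemma topSum_le_one {p : ℕ → ℝ} (hp : IsPmf p) (k : ℕ) : topSum p k ≤ 1 := by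
  apply csSup_le (topSum_set_nonempty p k)
  rintro t ⟨s, _, rfl⟩
  exact pmf_sum_le_one hp s

/-- For any pair `(X,Y)` (given by the distribution `q` of `Y` and the
conditional distributions `W y = P_{X|Y=y}`), and every `k ≥ 1`,
`∑_{x=1}^k P_X↓(x) ≤ E[∑_{x=1}^k P_{X|Y}↓(x)]`. -/
theorem stmt_5 {β : Type*} (q : β → ℝ) (W : β → ℕ → ℝ)
    (hq : IsPmf q) (hW : ∀ y, IsPmf (W y)) :
    ∀ k, topSum (fun x => ∑' y, q y * W y x) k ≤ ∑' y, q y * topSum (W y) k := by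
  intro k
  have hqs : Summable q := pmf_summable hq
  have hWle1 : ∀ y x, W y x ≤ 1 := fun y x =>
    (hW y).2 ▸ Summable.le_tsum (pmf_summable (hW y)) x (fun b _ => (hW y).1 b)
  have hsx : ∀ x, Summable (fun y => q y * W y x) := by
    intro x
    apply Summable.of_nonneg_of_le (fun y => mul_nonneg (hq.1 y) ((hW y).1 x))
      (fun y => ?_) hqs
    calc q y * W y x ≤ q y * 1 := mul_le_mul_of_nonneg_left (hWle1 y x) (hq.1 y)
      _ = q y := mul_one _
  have hRs : Summable (fun y => q y * topSum (W y) k) := by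
    apply Summable.of_nonneg_of_le (fun y => mul_nonneg (hq.1 y) ?_) (fun y => ?_) hqs
    · calc (0:ℝ) = ∑ x ∈ Finset.range k, 0 := by simp
        _ ≤ ∑ x ∈ Finset.range k, W y x := Finset.sum_le_sum (fun x _ => (hW y).1 x)
        _ ≤ topSum (W y) k := le_topSum (hW y) (Finset.card_range k)
    · calc q y * topSum (W y) k ≤ q y * 1 :=
          mul_le_mul_of_nonneg_left (topSum_le_one (hW y) k) (hq.1 y)
        _ = q y := mul_one _
  apply csSup_le (topSum_set_nonempty _ k)
  rintro t ⟨s, hs, rfl⟩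
  have h1 : ∑ x ∈ s, ∑' y, q y * W y x = ∑' y, q y * ∑ x ∈ s, W y x := by
    rw [← Summable.tsum_finsetSum (fun x _ => hsx x)]
    exact tsum_congr fun y => (Finset.mul_sum _ _ _).symm
  rw [h1]
  apply Summable.tsum_le_tsum _ _ hRs
  · intro y
    exact mul_le_mul_of_nonneg_left (le_topSum (hW y) hs) (hq.1 y)
  · apply Summable.of_nonneg_of_le
      (fun y => mul_nonneg (hq.1 y) (Finset.sum_nonneg fun x _ => (hW y).1 x))
      (fun y => ?_) hqs
    calc q y * ∑ x ∈ s, W y x ≤ q y * 1 :=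
        mul_le_mul_of_nonneg_left (pmf_sum_le_one (hW y) s) (hq.1 y)
      _ = q y := mul_one _
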